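/- arXiv:1508.07594 — 4 statements merged into one kernel-verified Lean document; each statement's English description precedes it below -/
import Mathlib

section
/- Let P ⊆ ℝ^d be a generalized polytope. Suppose the indicator function of P equals ∑_{i=1}^m α_i · [T_i] at Lebesgue-almost every point of ℝ^d, where each α_i is a real number and each T_i is a simplex (the convex hull of d+1 affinely independent points of ℝ^d). Then every algebraic vertex of P is a vertex of at least one of the simplices T_i. -/
open MeasureTheory Filter Topology RealInnerProductSpace

noncomputable section

/-- Euclidean space `ℝ^d`. -/
abbrev Euc (d : ℕ) := EuclideanSpace ℝ (Fin d)

/-- A convex polyhedron: an intersection of finitely many closed half-spaces. -/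
def IsConvexPolyhedron {d : ℕ} (P : Set (Euc d)) : Prop :=
  ∃ (n : ℕ) (a : Fin n → Euc d) (b : Fin n → ℝ),
    (∀ i, a i ≠ 0) ∧ P = {x | ∀ i, ⟪a i, x⟫ ≤ b i}

/-- A generalized polyhedron: a finite union of convex polyhedra. -/
def IsGenPolyhedron {d : ℕ} (P : Set (Euc d)) : Prop :=
  ∃ (n : ℕ) (Q : Fin n → Set (Euc d)),
    (∀ i, IsConvexPolyhedron (Q i)) ∧ P = ⋃ i, Q i

/-- A line-cone: a generalized polyhedron invariant under translation by every
multiple of some nonzero vector `u`. -/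
def IsLineCone {d : ℕ} (D : Set (Euc d)) : Prop :=
  IsGenPolyhedron D ∧ ∃ u : Euc d, u ≠ 0 ∧ ∀ t : ℝ, (fun x => x + t • u) '' D = D

/-- The tangent cone of `P` at `v`: points `y = v + x` such that `v + ε • x ∈ P`
for all sufficiently small `ε > 0`. -/
def tcone {d : ℕ} (P : Set (Euc d)) (v : Euc d) : Set (Euc d) :=
  {y | ∃ ε₀ > (0 : ℝ), ∀ ε : ℝ, 0 < ε → ε ≤ ε₀ → v + ε • (y - v) ∈ P}

/-- The real-valued indicator function of a set. -/
def ind {d : ℕ} (S : Set (Euc d)) : Euc d → ℝ := S.indicator fun _ => 1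

/-- `f` agrees Lebesgue-almost everywhere with a finite real linear combination of
indicator functions of line-cones. -/
def IsLinCombOfLineCones {d : ℕ} (f : Euc d → ℝ) : Prop :=
  ∃ (k : ℕ) (α : Fin k → ℝ) (D : Fin k → Set (Euc d)),
    (∀ i, IsLineCone (D i)) ∧ f =ᵐ[volume] fun x => ∑ i, α i * ind (D i) x

/-- `v` is an algebraic vertex of `P`: `v ∈ P` and the indicator function of the
tangent cone of `P` at `v` is not a.e. equal to a finite real linear combination of
indicator functions of line-cones. -/
def IsAlgebraicVertex {d : ℕ} (P : Set (Euc d)) (v : Euc d) : Prop :=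
  v ∈ P ∧ ¬ IsLinCombOfLineCones (ind (tcone P v))

open Set



variable {d : ℕ}

lemma ind_congr {S S' : Set (Euc d)} {y y' : Euc d} (h : y ∈ S ↔ y' ∈ S') :
    ind S y = ind S' y' := by
  classical
  simp only [ind, Set.indicator_apply]
  by_cases hy : y ∈ S
  · rw [if_pos hy, if_pos (h.mp hy)]
  · rw [if_neg hy, if_neg (fun hh => hy (h.mpr hh))]

lemma convex_dichotomy {J : Set ℝ} (hJ : Convex ℝ J) :
    (∃ δ > (0:ℝ), Set.Ioc 0 δ ⊆ J) ∨ (∀ᶠ ε in 𝓝[>] (0:ℝ), ε ∉ J) := by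
  by_cases h : ∀ δ > (0:ℝ), ∃ ε ∈ Set.Ioc (0:ℝ) δ, ε ∈ J
  · left
    obtain ⟨t, ht, htJ⟩ := h 1 one_pos
    refine ⟨t, ht.1, fun ε hε => ?_⟩
    rcases eq_or_lt_of_le hε.2 with rfl | hlt
    · exact htJ
    obtain ⟨s, hs, hsJ⟩ := h ε hε.1
    exact hJ.ordConnected.out hsJ htJ ⟨hs.2, le_of_lt hlt⟩
  · right
    push_neg at h
    obtain ⟨δ, hδ, hδJ⟩ := h
    filter_upwards [Ioc_mem_nhdsGT_of_mem ⟨le_refl 0, hδ⟩] with ε hε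
    exact hδJ ε hε

lemma eventually_mem_iff_tcone {S : Set (Euc d)}
    (hS : ∃ (n : ℕ) (Q : Fin n → Set (Euc d)), (∀ i, Convex ℝ (Q i)) ∧ S = ⋃ i, Q i)
    (v x : Euc d) :
    ∀ᶠ ε in 𝓝[>] (0:ℝ), ((v + ε • (x - v) ∈ S) ↔ x ∈ tcone S v) := by
  obtain ⟨n, Q, hQ, rfl⟩ := hS
  by_cases hx : x ∈ tcone (⋃ i, Q i) v
  · obtain ⟨ε₀, hε₀, h⟩ := hx
    filter_upwards [Ioc_mem_nhdsGT_of_mem ⟨le_refl 0, hε₀⟩] with ε hε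
    have hmem := h ε hε.1 hε.2
    constructor
    · intro _; exact ⟨ε₀, hε₀, h⟩
    · intro _; exact hmem
  · have key : ∀ i : Fin n, ∀ᶠ ε in 𝓝[>] (0:ℝ), v + ε • (x - v) ∉ Q i := by
      intro i
      have hset : {ε : ℝ | v + ε • (x - v) ∈ Q i}
          = (AffineMap.lineMap v x : ℝ →ᵃ[ℝ] Euc d) ⁻¹' Q i := by
        ext ε
        simp only [Set.mem_setOf_eq, Set.mem_preimage, AffineMap.lineMap_apply]
        rw [vsub_eq_sub, vadd_eq_add, add_comm]
      have hconv : Convex ℝ {ε : ℝ | v + ε • (x - v) ∈ Q i} := by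
        rw [hset]; exact (hQ i).affine_preimage _
      rcases convex_dichotomy hconv with ⟨δ, hδ, hsub⟩ | h
      · exact absurd ⟨δ, hδ, fun ε h1 h2 => Set.mem_iUnion.2 ⟨i, hsub ⟨h1, h2⟩⟩⟩ hx
      · exact h
    filter_upwards [eventually_all.2 key] with ε hε
    constructor
    · intro hmem
      obtain ⟨i, hi⟩ := Set.mem_iUnion.1 hmem
      exact absurd hi (hε i)
    · intro h; exact absurd h hx

lemma tcone_empty_of_not_mem {S : Set (Euc d)} (hS : IsClosed S) {v : Euc d}
    (hv : v ∉ S) : tcone S v = ∅ := by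
  ext x
  simp only [Set.mem_empty_iff_false, iff_false]
  rintro ⟨ε₀, hε₀, h⟩
  apply hv
  rw [← hS.closure_eq]
  have htend : Tendsto (fun ε : ℝ => v + ε • (x - v)) (𝓝[>] 0) (𝓝 v) := by
    have : Continuous (fun ε : ℝ => v + ε • (x - v)) := by continuity
    have ht := (this.tendsto 0).mono_left (nhdsWithin_le_nhds (s := Set.Ioi (0:ℝ)))
    simpa using ht
  refine mem_closure_of_tendsto htend ?_
  filter_upwards [Ioc_mem_nhdsGT_of_mem ⟨le_refl 0, hε₀⟩] with ε hε
  exact h ε hε.1 hε.2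

lemma isLineCone_empty (hd : 0 < d) : IsLineCone (∅ : Set (Euc d)) := by
  have : Nontrivial (Euc d) := by
    rw [← Module.finrank_pos_iff (R := ℝ)]
    simp [finrank_euclideanSpace_fin, hd]
  obtain ⟨u, hu⟩ := exists_ne (0 : Euc d)
  refine ⟨⟨0, Fin.elim0, fun i => i.elim0, by simp⟩, u, hu, fun t => by simp⟩

lemma qmp_scale (v : Euc d) {ε : ℝ} (hε : ε ≠ 0) :
    Measure.QuasiMeasurePreserving (fun x : Euc d => v + ε • (x - v)) volume volume := by
  have h1 : Measure.QuasiMeasurePreserving (fun x : Euc d => x - v) volume volume :=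
    (measurePreserving_sub_right volume v).quasiMeasurePreserving
  have h2 : Measure.QuasiMeasurePreserving (fun x : Euc d => ε • x) volume volume :=
    Measure.quasiMeasurePreserving_smul volume hε
  have h3 : Measure.QuasiMeasurePreserving (fun x : Euc d => v + x) volume volume :=
    (measurePreserving_add_left volume v).quasiMeasurePreserving
  exact (h3.comp h2).comp h1

lemma affine_apply_line (f : Euc d →ᵃ[ℝ] ℝ) (v x : Euc d) (ε : ℝ) :
    f (v + ε • (x - v)) = f v + ε * (f x - f v) := by
  have h : v + ε • (x - v) = AffineMap.lineMap v x ε := by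
    rw [AffineMap.lineMap_apply, vsub_eq_sub, vadd_eq_add, add_comm]
  rw [h, AffineMap.apply_lineMap, AffineMap.lineMap_apply]
  simp only [vsub_eq_sub, vadd_eq_add, smul_eq_mul]
  ring

lemma tcone_simplex_eq (b : AffineBasis (Fin (d+1)) ℝ (Euc d)) {v : Euc d}
    (hv : ∀ j, 0 ≤ b.coord j v) :
    tcone {x | ∀ j, 0 ≤ b.coord j x} v = {x | ∀ j, b.coord j v = 0 → 0 ≤ b.coord j x} := by
  ext x
  constructor
  · rintro ⟨ε₀, hε₀, h⟩ j hj
    have h1 := h ε₀ hε₀ le_rfl j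
    rw [affine_apply_line, hj] at h1
    nlinarith
  · intro hx
    have hev : ∀ j, ∀ᶠ ε in 𝓝[>] (0:ℝ), 0 ≤ b.coord j (v + ε • (x - v)) := by
      intro j
      rcases eq_or_lt_of_le (hv j) with h0 | hpos
      · filter_upwards [self_mem_nhdsWithin] with ε hε
        rw [affine_apply_line, ← h0]
        have hc := hx j h0.symm
        have hε' : (0:ℝ) ≤ ε := le_of_lt hε
        nlinarith
      · have hc : Continuous fun ε : ℝ => b.coord j v + ε * (b.coord j x - b.coord j v) := by
          continuity
        have ht : Tendsto (fun ε : ℝ => b.coord j v + ε * (b.coord j x - b.coord j v))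
            (𝓝 0) (𝓝 (b.coord j v)) := by simpa using hc.tendsto 0
        have hevt := ht.eventually (eventually_gt_nhds hpos)
        filter_upwards [hevt.filter_mono nhdsWithin_le_nhds] with ε hε
        rw [affine_apply_line]
        exact le_of_lt hε
    have hall := eventually_all.2 hev
    rw [Filter.eventually_iff, mem_nhdsGT_iff_exists_Ioc_subset] at hall
    obtain ⟨u, hu, hsub⟩ := hall
    exact ⟨u, hu, fun ε h1 h2 => hsub ⟨h1, h2⟩⟩

lemma isLineCone_tcone_simplex (hd : 0 < d) {pts : Fin (d+1) → Euc d}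
    (hp : AffineIndependent ℝ pts) {v : Euc d}
    (hvT : v ∈ convexHull ℝ (Set.range pts)) (hvne : ∀ j, pts j ≠ v) :
    IsLineCone (tcone (convexHull ℝ (Set.range pts)) v) := by
  classical
  have htot : affineSpan ℝ (Set.range pts) = ⊤ := by
    rw [hp.affineSpan_eq_top_iff_card_eq_finrank_add_one]
    simp [finrank_euclideanSpace_fin]
  set b : AffineBasis (Fin (d+1)) ℝ (Euc d) := ⟨pts, hp, htot⟩ with hb
  have hcb : ∀ j, (b : Fin (d+1) → Euc d) j = pts j := fun j => rfl
  have hTeq : convexHull ℝ (Set.range pts) = {x | ∀ j, 0 ≤ b.coord j x} := by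
    have : Set.range pts = Set.range (b : Fin (d+1) → Euc d) := rfl
    rw [this, b.convexHull_eq_nonneg_coord]
  have hv : ∀ j, 0 ≤ b.coord j v := by rw [hTeq] at hvT; exact hvT
  rw [hTeq, tcone_simplex_eq b hv]
  set C : Set (Euc d) := {x | ∀ j, b.coord j v = 0 → 0 ≤ b.coord j x} with hC
  -- linear parts as inner products
  set w : Fin (d+1) → Euc d := fun j =>
    (InnerProductSpace.toDual ℝ (Euc d)).symm ((b.coord j).linear.toContinuousLinearMap) with hw
  have hwip : ∀ j y, ⟪w j, y⟫ = (b.coord j).linear y := fun j y =>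
    InnerProductSpace.toDual_symm_apply
  have hcoord : ∀ j (y : Euc d), b.coord j y = ⟪w j, y⟫ + b.coord j 0 := by
    intro j y
    rw [hwip]
    conv_lhs => rw [AffineMap.decomp (b.coord j)]
    rfl
  have hca : ∀ i j, b.coord i (pts j) = if i = j then 1 else 0 := by
    intro i j
    rw [← hcb j]
    exact b.coord_apply i j
  have hnontriv : Nontrivial (Fin (d+1)) := by
    constructor; exact ⟨⟨0, by omega⟩, ⟨1, by omega⟩, by simp [Fin.ext_iff]⟩
  have hwne : ∀ j, w j ≠ 0 := by
    intro j hj0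
    obtain ⟨k, hk⟩ := exists_ne j
    have h1 : b.coord j (pts j) = 1 := by simp [hca]
    have h0' : b.coord j (pts k) = 0 := by simp [hca, (Ne.symm hk)]
    have e1 := hcoord j (pts j)
    have e0 := hcoord j (pts k)
    rw [hj0, inner_zero_left] at e1 e0
    rw [h1] at e1; rw [h0'] at e0
    linarith
  -- H-representation of C
  have hgen : IsGenPolyhedron C := by
    set Z : Finset (Fin (d+1)) := Finset.univ.filter (fun j => b.coord j v = 0) with hZ
    set e := Z.equivFin with he
    refine ⟨1, fun _ => C, fun _ => ⟨Z.card, fun k => -(w ((e.symm k : Z) : Fin (d+1))),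
      fun k => b.coord ((e.symm k : Z) : Fin (d+1)) 0, fun k => neg_ne_zero.2 (hwne _), ?_⟩,
      (Set.iUnion_const C).symm⟩
    ext x
    simp only [hC, Set.mem_setOf_eq]
    constructor
    · intro h k
      have hj0 : b.coord ((e.symm k : Z) : Fin (d+1)) v = 0 :=
        (Finset.mem_filter.mp (e.symm k).2).2
      have hpos := h ((e.symm k : Z) : Fin (d+1)) hj0
      rw [hcoord ((e.symm k : Z) : Fin (d+1)) x] at hpos
      rw [inner_neg_left]
      linarith
    · intro h j hj0
      have hjZ : j ∈ Z := by rw [hZ, Finset.mem_filter]; exact ⟨Finset.mem_univ j, hj0⟩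
      have hk := h (e ⟨j, hjZ⟩)
      rw [Equiv.symm_apply_apply] at hk
      rw [inner_neg_left] at hk
      rw [hcoord j x]
      linarith
  -- the translation direction
  have hsum := b.sum_coord_apply_eq_one v
  have h₁ : ∃ j₁, b.coord j₁ v ≠ 0 := by
    by_contra hno
    push_neg at hno
    rw [Finset.sum_congr rfl (fun j _ => hno j)] at hsum
    simp at hsum
  obtain ⟨j₁, hj₁⟩ := h₁
  have h₂ : ∃ j₂, j₂ ≠ j₁ ∧ b.coord j₂ v ≠ 0 := by
    by_contra hno
    push_neg at hno
    apply hvne j₁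
    apply b.ext_elem
    intro i
    rw [← hcb j₁, b.coord_apply]
    by_cases hi : i = j₁
    · subst hi
      simp only [if_pos rfl]
      have : ∑ j, b.coord j v = b.coord i v := by
        rw [Finset.sum_eq_single i]
        · intro j _ hji; exact hno j hji
        · intro hni; exact absurd (Finset.mem_univ i) hni
      rw [this] at hsum
      exact hsum.symm
    · rw [if_neg hi]
      exact (hno i hi).symm
  obtain ⟨j₂, hj₂ne, hj₂⟩ := h₂
  set u : Euc d := pts j₁ - pts j₂ with hu'
  have hu : u ≠ 0 := sub_ne_zero.2 fun h => hj₂ne ((hp.injective h).symm)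
  have hlin : ∀ j, b.coord j v = 0 → (b.coord j).linear u = 0 := by
    intro j hj
    have hne₁ : j ≠ j₁ := fun h => hj₁ (h ▸ hj)
    have hne₂ : j ≠ j₂ := fun h => hj₂ (h ▸ hj)
    have hv1 : (b.coord j).linear (pts j₁ -ᵥ pts j₂) = b.coord j (pts j₁) -ᵥ b.coord j (pts j₂) :=
      AffineMap.linearMap_vsub _ _ _
    rw [vsub_eq_sub, vsub_eq_sub] at hv1
    rw [hu', hv1, hca j j₁, hca j j₂, if_neg hne₁, if_neg hne₂, sub_zero]
  have hmem : ∀ (t : ℝ) y, y ∈ C → y + t • u ∈ C := by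
    intro t y hy j hj
    have hcalc : b.coord j (y + t • u) = (b.coord j).linear (t • u) + b.coord j y := by
      rw [add_comm y (t • u)]
      exact (b.coord j).map_vadd y (t • u)
    rw [hcalc, (b.coord j).linear.map_smul, hlin j hj, smul_zero, zero_add]
    exact hy j hj
  refine ⟨hgen, u, hu, fun t => ?_⟩
  ext y
  constructor
  · rintro ⟨z, hz, rfl⟩
    exact hmem t z hz
  · intro hy
    refine ⟨y + (-t) • u, hmem (-t) y hy, ?_⟩
    simp only [neg_smul]
    abel

/-- If the indicator function of a generalized polytope `P` is a.e. equal
to a real linear combination of indicator functions of simplices, then every algebraic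
vertex of `P` is a vertex of one of the simplices. -/
theorem statement_1 {d : ℕ} (P : Set (Euc d))
    (hP : IsGenPolyhedron P) (hPb : Bornology.IsBounded P)
    (m : ℕ) (α : Fin m → ℝ) (p : Fin m → Fin (d + 1) → Euc d)
    (hind : ∀ i, AffineIndependent ℝ (p i))
    (heq : ind P =ᵐ[volume]
      fun x => ∑ i, α i * ind (convexHull ℝ (Set.range (p i))) x)
    (v : Euc d) (hv : IsAlgebraicVertex P v) :
    ∃ i j, p i j = v := by
  by_cases hd0 : d = 0
  · subst hd0
    have hsub : ∀ x y : Euc 0, x = y := by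
      intro x y; ext i; exact Fin.elim0 i
    have hμ : (volume : Measure (Euc 0)) ≠ 0 := by
      intro h
      have h1 : 0 < (volume : Measure (Euc 0)) Set.univ :=
        IsOpen.measure_pos volume isOpen_univ ⟨0, trivial⟩
      rw [h] at h1; simp at h1
    haveI : (ae (volume : Measure (Euc 0))).NeBot := ae_neBot.2 hμ
    obtain ⟨x, hx⟩ := heq.exists
    rw [hsub x v] at hx
    have hPv : ind P v = 1 := by simp [ind, Set.indicator_of_mem hv.1]
    rcases Nat.eq_zero_or_pos m with hm | hm
    · subst hm
      rw [hPv] at hx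
      norm_num at hx
    · exact ⟨⟨0, hm⟩, 0, hsub _ _⟩
  · have hd : 0 < d := Nat.pos_of_ne_zero hd0
    obtain ⟨hvP, hnot⟩ := hv
    by_contra hcon
    push_neg at hcon
    apply hnot
    set T : Fin m → Set (Euc d) := fun i => convexHull ℝ (Set.range (p i)) with hT
    refine ⟨m, α, fun i => tcone (T i) v, fun i => ?_, ?_⟩
    · show IsLineCone (tcone (T i) v)
      by_cases hvi : v ∈ T i
      · exact isLineCone_tcone_simplex hd (hind i) hvi (fun j h => hcon i j h)
      · rw [tcone_empty_of_not_mem (((Set.finite_range (p i)).isClosed_convexHull ℝ)) hvi]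
        exact isLineCone_empty hd
    · have hPconv : ∃ (n : ℕ) (Q : Fin n → Set (Euc d)), (∀ i, Convex ℝ (Q i)) ∧ P = ⋃ i, Q i := by
        obtain ⟨n, Q, hQ, rfl⟩ := hP
        refine ⟨n, Q, fun i => ?_, rfl⟩
        obtain ⟨k, a, bb, _, hQi⟩ := hQ i
        rw [hQi]
        have hset : {x : Euc d | ∀ j, ⟪a j, x⟫ ≤ bb j} = ⋂ j, {x : Euc d | ⟪a j, x⟫ ≤ bb j} := by
          ext x; simp [Set.mem_iInter]
        rw [hset]
        refine convex_iInter fun j => convex_halfSpace_le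
          ⟨fun x y => inner_add_right _ _ _, fun c x => ?_⟩ _
        rw [smul_eq_mul]
        exact real_inner_smul_right (a j) x c
      have hTconv : ∀ i, ∃ (n : ℕ) (Q : Fin n → Set (Euc d)), (∀ k, Convex ℝ (Q k)) ∧ T i = ⋃ k, Q k :=
        fun i => ⟨1, fun _ => T i, fun _ => convex_convexHull ℝ _, (Set.iUnion_const _).symm⟩
      set φ : ℕ → Euc d → Euc d := fun n x => v + (1 / (n+1) : ℝ) • (x - v) with hφ
      have hqmp : ∀ n : ℕ, Measure.QuasiMeasurePreserving (φ n) volume volume := fun n =>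
        qmp_scale v (by positivity : (0:ℝ) < 1/(n+1)).ne'
      have hae : ∀ᵐ x ∂(volume : Measure (Euc d)), ∀ n : ℕ,
          ind P (φ n x) = ∑ i, α i * ind (T i) (φ n x) := by
        rw [ae_all_iff]
        intro n
        exact (hqmp n).ae_eq heq
      filter_upwards [hae] with x hx
      have hεt : Tendsto (fun n : ℕ => (1 / (n+1) : ℝ)) atTop (𝓝[>] 0) := by
        rw [tendsto_nhdsWithin_iff]
        constructor
        · exact tendsto_one_div_add_atTop_nhds_zero_nat
        · refine Filter.Eventually.of_forall fun n => ?_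
          simp only [Set.mem_Ioi]
          positivity
      have hevP := eventually_mem_iff_tcone hPconv v x
      have hevT := eventually_all.2 (fun i => eventually_mem_iff_tcone (hTconv i) v x)
      obtain ⟨n, hn⟩ := (hεt.eventually (hevP.and hevT)).exists
      have h1 : ind (tcone P v) x = ind P (φ n x) := (ind_congr hn.1).symm
      have h2 : ∀ i, ind (T i) (φ n x) = ind (tcone (T i) v) x := fun i => ind_congr (hn.2 i)
      rw [h1, hx n]
      exact Finset.sum_congr rfl fun i _ => by rw [h2 i]
end
end

section
/- Let P ⊆ ℝ^d be a generalized polyhedron. Suppose the indicator function of P equals ∑_{i=1}^k α_i · [D_i] + ∑_{j=1}^m β_j · [C_j] at Lebesgue-almost every point of ℝ^d, where the α_i, β_j are real numbers, each D_i is a line-cone, and each C_j is a simplicial cone. Then every algebraic vertex of P is the apex of at least one of the simplicial cones C_j. -/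
open MeasureTheory Filter Topology RealInnerProductSpace

noncomputable section

/-- A simplicial cone with apex `a` generated by `d` linearly independent vectors. -/
def IsSimplicialCone {d : ℕ} (C : Set (Euc d)) (a : Euc d) : Prop :=
  ∃ w : Fin d → Euc d, LinearIndependent ℝ w ∧
    C = {x | ∃ t : Fin d → ℝ, (∀ j, 0 ≤ t j) ∧ x = a + ∑ j, t j • w j}

variable {d : ℕ}

lemma tendsto_aux (l c : ℝ) : Tendsto (fun ε : ℝ => l + ε * c) (𝓝[>] 0) (𝓝 l) := by
  have : Continuous fun ε : ℝ => l + ε * c := by continuity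
  simpa using (this.tendsto 0).mono_left nhdsWithin_le_nhds

lemma inner_affine (a v y : Euc d) (ε : ℝ) : ⟪a, v + ε • y⟫ = ⟪a, v⟫ + ε * ⟪a, y⟫ := by
  rw [inner_add_right, real_inner_smul_right]

lemma ev_halfspace (a v y : Euc d) (b : ℝ) :
    ∃ p : Prop, ∀ᶠ ε in 𝓝[>] (0:ℝ), ((⟪a, v + ε • y⟫ ≤ b) ↔ p) := by
  rcases lt_trichotomy (⟪a, v⟫ : ℝ) b with h | h | h
  · refine ⟨True, ?_⟩
    filter_upwards [(tendsto_aux ⟪a, v⟫ ⟪a, y⟫).eventually_le_const h] with ε hε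
    simp only [inner_affine, iff_true]
    exact hε
  · refine ⟨(⟪a, y⟫ : ℝ) ≤ 0, ?_⟩
    filter_upwards [self_mem_nhdsWithin] with ε (hε : ε ∈ Set.Ioi (0:ℝ))
    rw [inner_affine, h]
    simp only [Set.mem_Ioi] at hε
    constructor
    · intro hh; nlinarith
    · intro hh; nlinarith
  · refine ⟨False, ?_⟩
    filter_upwards [(tendsto_aux ⟪a, v⟫ ⟪a, y⟫).eventually_const_lt h] with ε hε
    simp only [inner_affine, iff_false, not_le]
    exact hε

lemma IsConvexPolyhedron.isGenPolyhedron {Q : Set (Euc d)} (h : IsConvexPolyhedron Q) :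
    IsGenPolyhedron Q :=
  ⟨1, fun _ => Q, fun _ => h, (Set.iUnion_const Q).symm⟩

lemma ev_mem_convex {Q : Set (Euc d)} (hQ : IsConvexPolyhedron Q) (v y : Euc d) :
    ∃ p : Prop, ∀ᶠ ε in 𝓝[>] (0:ℝ), ((v + ε • y ∈ Q) ↔ p) := by
  obtain ⟨n, a, b, -, rfl⟩ := hQ
  choose p hp using fun l => ev_halfspace (a l) v y (b l)
  exact ⟨∀ l, p l, (eventually_all.2 hp).mono fun ε h => by
    simpa only [Set.mem_setOf_eq] using forall_congr' h⟩

lemma ev_mem_gen {Q : Set (Euc d)} (hQ : IsGenPolyhedron Q) (v y : Euc d) :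
    ∃ p : Prop, ∀ᶠ ε in 𝓝[>] (0:ℝ), ((v + ε • y ∈ Q) ↔ p) := by
  obtain ⟨n, Qf, hQf, rfl⟩ := hQ
  choose p hp using fun i => ev_mem_convex (hQf i) v y
  exact ⟨∃ i, p i, (eventually_all.2 hp).mono fun ε h => by
    rw [Set.mem_iUnion]; exact exists_congr h⟩

lemma mem_tcone_iff_eventually {Q : Set (Euc d)} (v x : Euc d) :
    x ∈ tcone Q v ↔ ∀ᶠ ε in 𝓝[>] (0:ℝ), v + ε • (x - v) ∈ Q := by
  constructor
  · rintro ⟨ε₀, hε₀, h⟩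
    filter_upwards [Ioc_mem_nhdsGT_of_mem ⟨le_rfl, hε₀⟩] with ε hε
    exact h ε hε.1 hε.2
  · intro h
    obtain ⟨u, hu, hsub⟩ := mem_nhdsGT_iff_exists_Ioc_subset.1 h
    exact ⟨u, hu, fun ε h1 h2 => hsub ⟨h1, h2⟩⟩

lemma ev_tcone {Q : Set (Euc d)} (hQ : IsGenPolyhedron Q) (v x : Euc d) :
    ∀ᶠ ε in 𝓝[>] (0:ℝ), ((v + ε • (x - v) ∈ Q) ↔ x ∈ tcone Q v) := by
  obtain ⟨p, hp⟩ := ev_mem_gen hQ v (x - v)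
  have hpt : p ↔ x ∈ tcone Q v := by
    constructor
    · intro h
      rw [mem_tcone_iff_eventually]
      exact hp.mono fun ε hε => hε.2 h
    · intro h
      obtain ⟨ε, hiff, hmem⟩ := (hp.and ((mem_tcone_iff_eventually v x).1 h)).exists
      exact hiff.1 hmem
  exact hp.mono fun ε hε => hε.trans hpt

lemma tcone_eq_empty {n : ℕ} {a : Fin n → Euc d} {b : Fin n → ℝ} {v : Euc d}
    (hv : v ∉ {x : Euc d | ∀ i, ⟪a i, x⟫ ≤ b i}) :
    tcone {x : Euc d | ∀ i, ⟪a i, x⟫ ≤ b i} v = ∅ := by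
  ext y
  simp only [Set.mem_empty_iff_false, iff_false]
  intro hy
  have hy' := (mem_tcone_iff_eventually v y).1 hy
  simp only [Set.mem_setOf_eq, not_forall, not_le] at hv
  obtain ⟨i, hi⟩ := hv
  have h2 : ∀ᶠ ε in 𝓝[>] (0:ℝ), b i < ⟪a i, v⟫ + ε * ⟪a i, y - v⟫ :=
    (tendsto_aux _ _).eventually_const_lt hi
  obtain ⟨ε, h3, h4⟩ := (hy'.and h2).exists
  have := h3 i
  rw [inner_affine] at this
  linarith

lemma tcone_eq_of_mem {n : ℕ} {a : Fin n → Euc d} {b : Fin n → ℝ} {v : Euc d}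
    (hv : v ∈ {x : Euc d | ∀ i, ⟪a i, x⟫ ≤ b i}) :
    tcone {x : Euc d | ∀ i, ⟪a i, x⟫ ≤ b i} v
      = {y | ∀ i, ⟪a i, v⟫ = b i → ⟪a i, y⟫ ≤ ⟪a i, v⟫} := by
  ext y
  simp only [Set.mem_setOf_eq]
  constructor
  · rintro ⟨ε₀, hε₀, h⟩ i hib
    have := h ε₀ hε₀ le_rfl i
    rw [inner_affine, hib] at this
    have h2 : (⟪a i, y - v⟫ : ℝ) ≤ 0 := by nlinarith
    rw [inner_sub_right] at h2
    linarith
  · intro hy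
    rw [mem_tcone_iff_eventually]
    have : ∀ i, ∀ᶠ ε in 𝓝[>] (0:ℝ), ⟪a i, v + ε • (y - v)⟫ ≤ b i := by
      intro i
      rcases eq_or_lt_of_le (hv i) with h | h
      · filter_upwards [self_mem_nhdsWithin] with ε (hε : ε ∈ Set.Ioi (0:ℝ))
        simp only [Set.mem_Ioi] at hε
        have h2 : (⟪a i, y⟫ : ℝ) ≤ ⟪a i, v⟫ := hy i h
        rw [inner_affine, inner_sub_right]
        nlinarith
      · filter_upwards [(tendsto_aux (⟪a i, v⟫:ℝ) ⟪a i, y - v⟫).eventually_le_const h] with ε hε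
        rw [inner_affine]
        exact hε
    filter_upwards [eventually_all.2 this] with ε hε
    exact hε

lemma isConvexPolyhedron_inter {n : ℕ} {a : Fin n → Euc d} (c : Fin n → ℝ)
    (ha : ∀ i, a i ≠ 0) (s : Finset (Fin n)) :
    IsConvexPolyhedron {y : Euc d | ∀ i ∈ s, ⟪a i, y⟫ ≤ c i} := by
  refine ⟨s.card, fun j => a (s.equivFin.symm j), fun j => c (s.equivFin.symm j),
    fun j => ha _, ?_⟩
  ext y
  simp only [Set.mem_setOf_eq]
  constructor
  · intro h j
    exact h _ (s.equivFin.symm j).2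
  · intro h i hi
    have := h (s.equivFin ⟨i, hi⟩)
    simpa using this

lemma tcone_gen_repr {n : ℕ} (Qf : Fin n → Set (Euc d))
    (hQf : ∀ i, IsConvexPolyhedron (Qf i)) (v : Euc d) :
    tcone (⋃ i, Qf i) v = ⋃ i, tcone (Qf i) v := by
  ext y
  constructor
  · intro hy
    have h1 := (mem_tcone_iff_eventually v y).1 hy
    have h2 : ∀ᶠ ε in 𝓝[>] (0:ℝ), ∀ i, ((v + ε • (y - v) ∈ Qf i) ↔ y ∈ tcone (Qf i) v) :=
      eventually_all.2 fun i => ev_tcone (hQf i).isGenPolyhedron v y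
    obtain ⟨ε, hε1, hε2⟩ := (h1.and h2).exists
    obtain ⟨i, hmem⟩ := Set.mem_iUnion.1 hε1
    exact Set.mem_iUnion.2 ⟨i, (hε2 i).1 hmem⟩
  · intro hy
    obtain ⟨i, ε₀, h0, h⟩ := Set.mem_iUnion.1 hy
    exact ⟨ε₀, h0, fun ε ha hb => Set.mem_iUnion.2 ⟨i, h ε ha hb⟩⟩

lemma isGenPolyhedron_tcone {Q : Set (Euc d)} (hQ : IsGenPolyhedron Q) (v : Euc d) :
    IsGenPolyhedron (tcone Q v) := by
  classical
  obtain ⟨n, Qf, hQf, rfl⟩ := hQ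
  rw [tcone_gen_repr Qf hQf]
  have key : ∀ i, tcone (Qf i) v = ∅ ∨ IsConvexPolyhedron (tcone (Qf i) v) := by
    intro i
    obtain ⟨nl, a, b, ha, hset⟩ := hQf i
    by_cases hvi : v ∈ Qf i
    · right
      rw [hset] at hvi ⊢
      rw [tcone_eq_of_mem hvi]
      have : {y : Euc d | ∀ l, ⟪a l, v⟫ = b l → ⟪a l, y⟫ ≤ ⟪a l, v⟫}
          = {y : Euc d | ∀ l ∈ Finset.univ.filter (fun l => (⟪a l, v⟫:ℝ) = b l),
              ⟪a l, y⟫ ≤ ⟪a l, v⟫} := by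
        ext y; simp [Finset.mem_filter]
      rw [this]
      exact isConvexPolyhedron_inter _ ha _
    · left
      rw [hset] at hvi ⊢
      exact tcone_eq_empty hvi
  set s : Finset (Fin n) := Finset.univ.filter
    (fun i => IsConvexPolyhedron (tcone (Qf i) v)) with hs
  refine ⟨s.card, fun j => tcone (Qf (s.equivFin.symm j)) v, fun j => ?_, ?_⟩
  · have := (s.equivFin.symm j).2
    exact (Finset.mem_filter.1 this).2
  · ext y
    simp only [Set.mem_iUnion]
    constructor
    · rintro ⟨i, hi⟩
      have hconv : IsConvexPolyhedron (tcone (Qf i) v) := by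
        rcases key i with h | h
        · rw [h] at hi; exact absurd hi (Set.notMem_empty y)
        · exact h
      have his : i ∈ s := Finset.mem_filter.2 ⟨Finset.mem_univ _, hconv⟩
      refine ⟨s.equivFin ⟨i, his⟩, ?_⟩
      simpa using hi
    · rintro ⟨j, hj⟩
      exact ⟨_, hj⟩

lemma tcone_invariant {Q : Set (Euc d)} {u : Euc d}
    (hQ : ∀ t : ℝ, (fun x => x + t • u) '' Q = Q) (v : Euc d) :
    ∀ t : ℝ, (fun x => x + t • u) '' tcone Q v = tcone Q v := by
  have hmem : ∀ (t : ℝ) (x : Euc d), x ∈ Q → x + t • u ∈ Q := fun t x hx =>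
    (hQ t) ▸ ⟨x, hx, rfl⟩
  have hsub : ∀ t : ℝ, (fun x => x + t • u) '' tcone Q v ⊆ tcone Q v := by
    rintro t _ ⟨y, ⟨ε₀, h0, h⟩, rfl⟩
    refine ⟨ε₀, h0, fun ε he1 he2 => ?_⟩
    have h2 := hmem (ε * t) _ (h ε he1 he2)
    have h3 : v + ε • (y - v) + (ε * t) • u = v + ε • (y + t • u - v) := by
      rw [mul_smul]; module
    rwa [h3] at h2
  intro t
  refine Set.Subset.antisymm (hsub t) fun y hy => ?_
  refine ⟨y + (-t) • u, hsub (-t) ⟨y, hy, rfl⟩, ?_⟩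
  module

lemma invariant_of_inner_zero {n : ℕ} (a : Fin n → Euc d) (c : Fin n → ℝ)
    (s : Finset (Fin n)) (u : Euc d) (hu : ∀ i ∈ s, (⟪a i, u⟫ : ℝ) = 0) (t : ℝ) :
    (fun x => x + t • u) '' {y : Euc d | ∀ i ∈ s, ⟪a i, y⟫ ≤ c i}
      = {y : Euc d | ∀ i ∈ s, ⟪a i, y⟫ ≤ c i} := by
  have haux : ∀ (r : ℝ) (z : Euc d) (i), i ∈ s → (⟪a i, z + r • u⟫ : ℝ) = ⟪a i, z⟫ := by
    intro r z i hi
    rw [inner_add_right, real_inner_smul_right, hu i hi, mul_zero, add_zero]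
  ext z
  constructor
  · rintro ⟨y, hy, rfl⟩ i hi
    rw [haux t y i hi]
    exact hy i hi
  · intro hz
    refine ⟨z + (-t) • u, fun i hi => ?_, by module⟩
    rw [haux (-t) z i hi]
    exact hz i hi

lemma simplicial_rep {C : Set (Euc d)} {ap : Euc d} (h : IsSimplicialCone C ap) :
    ∃ nv : Fin d → Euc d, (∀ l, nv l ≠ 0) ∧ C = {x | ∀ l, ⟪nv l, x⟫ ≤ ⟪nv l, ap⟫} := by
  obtain ⟨w, hw, rfl⟩ := h
  have hfd : FiniteDimensional ℝ (Euc d) := by infer_instance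
  have card_eq : Fintype.card (Fin d) = Module.finrank ℝ (Euc d) := by
    simp [finrank_euclideanSpace]
  let B : Module.Basis (Fin d) ℝ (Euc d) :=
    Module.Basis.mk hw (hw.span_eq_top_of_card_eq_finrank' card_eq).ge
  have hB : ∀ l, B l = w l := fun l => Module.Basis.mk_apply _ _ l
  let r : Fin d → Euc d := fun l =>
    (InnerProductSpace.toDual ℝ (Euc d)).symm (LinearMap.toContinuousLinearMap (B.coord l))
  have hr : ∀ (l) (x : Euc d), (⟪r l, x⟫ : ℝ) = B.repr x l := by
    intro l x
    simp [r, InnerProductSpace.toDual_symm_apply, Module.Basis.coord_apply]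
  refine ⟨fun l => -(r l), fun l h0 => ?_, ?_⟩
  · have h1 : (⟪r l, B l⟫ : ℝ) = 1 := by rw [hr]; simp
    have h2 : r l = 0 := by simpa [neg_eq_zero] using h0
    rw [h2, inner_zero_left] at h1
    norm_num at h1
  · ext x
    simp only [Set.mem_setOf_eq, inner_neg_left, neg_le_neg_iff]
    constructor
    · rintro ⟨t, ht, rfl⟩ l
      have hsum : (∑ j, t j • w j) = ∑ j, t j • B j := by simp [hB]
      rw [inner_add_right, hsum]
      have : (⟪r l, ∑ j, t j • B j⟫ : ℝ) = t l := by
        rw [hr, B.repr_sum_self]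
      linarith [ht l]
    · intro hx
      refine ⟨fun l => B.repr (x - ap) l, fun l => ?_, ?_⟩
      · have := hx l
        have h2 : (0:ℝ) ≤ ⟪r l, x - ap⟫ := by
          rw [inner_sub_right]; linarith
        rw [hr] at h2
        exact h2
      · have : (∑ l, B.repr (x - ap) l • w l) = ∑ l, B.repr (x - ap) l • B l := by
          simp [hB]
        rw [this, B.sum_repr (x - ap)]
        abel

lemma null_preimage_affine {c : ℝ} (hc : c ≠ 0) (v : Euc d) {N : Set (Euc d)}
    (hN : volume N = 0) :
    volume ((fun x : Euc d => v + c • (x - v)) ⁻¹' N) = 0 := by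
  have hfun : (fun x : Euc d => v + c • (x - v))
      = (fun y : Euc d => (v - c • v) + y) ∘ (fun x : Euc d => c • x) := by
    funext x
    simp only [Function.comp_apply, smul_sub]
    module
  rw [hfun, Set.preimage_comp]
  have h1 : volume ((fun y : Euc d => (v - c • v) + y) ⁻¹' N) = 0 := by
    rw [measure_preimage_add]; exact hN
  calc volume ((c • ·) ⁻¹' ((fun y : Euc d => (v - c • v) + y) ⁻¹' N))
      = ENNReal.ofReal (abs (c ^ Module.finrank ℝ (Euc d))⁻¹)
        * volume ((fun y : Euc d => (v - c • v) + y) ⁻¹' N) :=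
        Measure.addHaar_preimage_smul volume hc _
    _ = 0 := by rw [h1, mul_zero]

lemma ind_congr_s3 {S1 S2 : Set (Euc d)} {x1 x2 : Euc d} (h : x1 ∈ S1 ↔ x2 ∈ S2) :
    ind S1 x1 = ind S2 x2 := by
  by_cases hx : x2 ∈ S2
  · rw [ind, ind, Set.indicator_of_mem (h.2 hx), Set.indicator_of_mem hx]
  · rw [ind, ind, Set.indicator_of_notMem (fun hh => hx (h.1 hh)),
      Set.indicator_of_notMem hx]

/-- If the indicator function of a generalized polyhedron `P` is a.e.
equal to a real linear combination of indicator functions of line-cones and simplicial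
cones, then every algebraic vertex of `P` is the apex of one of the simplicial cones. -/
theorem statement_3 {d : ℕ} (P : Set (Euc d)) (hP : IsGenPolyhedron P)
    (k m : ℕ) (α : Fin k → ℝ) (β : Fin m → ℝ)
    (D : Fin k → Set (Euc d)) (C : Fin m → Set (Euc d)) (a : Fin m → Euc d)
    (hD : ∀ i, IsLineCone (D i)) (hC : ∀ j, IsSimplicialCone (C j) (a j))
    (heq : ind P =ᵐ[volume] fun x =>
      (∑ i, α i * ind (D i) x) + ∑ j, β j * ind (C j) x)
    (v : Euc d) (hv : IsAlgebraicVertex P v) :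
    ∃ j, a j = v := by
  classical
  by_contra hcon
  push_neg at hcon
  apply hv.2
  choose nv hnv hCeq using fun j => simplicial_rep (hC j)
  have hCgen : ∀ j, IsGenPolyhedron (C j) := by
    intro j
    have hcp : IsConvexPolyhedron (C j) := ⟨d, nv j, fun l => ⟪nv j l, a j⟫, hnv j, hCeq j⟩
    exact hcp.isGenPolyhedron
  have hDt : ∀ i, IsLineCone (tcone (D i) v) := by
    intro i
    obtain ⟨hgen, u, hu, hinv⟩ := hD i
    exact ⟨isGenPolyhedron_tcone hgen v, u, hu, tcone_invariant hinv v⟩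
  have hCt : ∀ j, IsLineCone (tcone (C j) v) := by
    intro j
    have huj : v - a j ≠ 0 := sub_ne_zero.2 (Ne.symm (hcon j))
    by_cases hvC : v ∈ C j
    · rw [hCeq j] at hvC
      have htc : tcone (C j) v = {y | ∀ l ∈ Finset.univ.filter
          (fun l => (⟪nv j l, v⟫:ℝ) = ⟪nv j l, a j⟫), ⟪nv j l, y⟫ ≤ ⟪nv j l, v⟫} := by
        rw [hCeq j, tcone_eq_of_mem hvC]
        ext y; simp [Finset.mem_filter]
      constructor
      · rw [htc]
        exact (isConvexPolyhedron_inter _ (hnv j) _).isGenPolyhedron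
      · refine ⟨v - a j, huj, fun t => ?_⟩
        rw [htc]
        apply invariant_of_inner_zero
        intro l hl
        have h2 : (⟪nv j l, v⟫:ℝ) = ⟪nv j l, a j⟫ := (Finset.mem_filter.1 hl).2
        rw [inner_sub_right, h2, sub_self]
    · have htc : tcone (C j) v = ∅ := by
        rw [hCeq j] at hvC ⊢
        exact tcone_eq_empty hvC
      rw [htc]
      exact ⟨⟨0, Fin.elim0, fun i => i.elim0, by simp⟩, v - a j, huj, fun t => by simp⟩
  set G : Euc d → ℝ :=
    fun x => (∑ i, α i * ind (D i) x) + ∑ j, β j * ind (C j) x with hG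
  have hae : ∀ᵐ x, ∀ n : ℕ,
      ind P (v + (1/(n+1):ℝ) • (x - v)) = G (v + (1/(n+1):ℝ) • (x - v)) := by
    rw [ae_all_iff]
    intro n
    have h0 := null_preimage_affine (c := (1/(n+1):ℝ)) (by positivity) v (ae_iff.1 heq)
    rw [ae_iff]
    exact measure_mono_null (fun x hx => hx) h0
  have key : ind (tcone P v) =ᵐ[volume] fun x =>
      (∑ i, α i * ind (tcone (D i) v) x) + ∑ j, β j * ind (tcone (C j) v) x := by
    filter_upwards [hae] with x hx
    have e1 := ev_tcone hP v x
    have e2 : ∀ᶠ ε in 𝓝[>] (0:ℝ), ∀ i, ((v + ε • (x - v) ∈ D i) ↔ x ∈ tcone (D i) v) :=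
      eventually_all.2 fun i => ev_tcone (hD i).1 v x
    have e3 : ∀ᶠ ε in 𝓝[>] (0:ℝ), ∀ j, ((v + ε • (x - v) ∈ C j) ↔ x ∈ tcone (C j) v) :=
      eventually_all.2 fun j => ev_tcone (hCgen j) v x
    have hseq : Tendsto (fun n : ℕ => (1/(n+1):ℝ)) atTop (𝓝[>] 0) := by
      refine tendsto_nhdsWithin_of_tendsto_nhds_of_eventually_within _
        tendsto_one_div_add_atTop_nhds_zero_nat ?_
      filter_upwards with n
      exact Set.mem_Ioi.2 (by positivity)
    obtain ⟨n, ⟨h1, h2⟩, h3⟩ := (hseq.eventually ((e1.and e2).and e3)).exists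
    calc ind (tcone P v) x
        = ind P (v + (1/(n+1):ℝ) • (x - v)) := (ind_congr_s3 h1).symm
      _ = G (v + (1/(n+1):ℝ) • (x - v)) := hx n
      _ = _ := by
          simp only [hG]
          congr 1
          · exact Finset.sum_congr rfl fun i _ => by rw [ind_congr_s3 (h2 i)]
          · exact Finset.sum_congr rfl fun j _ => by rw [ind_congr_s3 (h3 j)]
  refine ⟨k + m, Fin.addCases α β,
    Fin.addCases (fun i => tcone (D i) v) (fun j => tcone (C j) v), ?_, ?_⟩
  · intro l
    refine Fin.addCases (fun i => ?_) (fun j => ?_) l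
    · simpa using hDt i
    · simpa using hCt j
  · refine key.trans (Filter.EventuallyEq.of_eq (funext fun x => ?_))
    rw [Fin.sum_univ_add]
    simp
end
end

section
/- Every generalized polytope P ⊆ ℝ^d of positive Lebesgue measure has at least one algebraic vertex. -/
open MeasureTheory Filter Topology RealInnerProductSpace

set_option maxHeartbeats 1000000

noncomputable section

section AuxLemmas

variable {d : ℕ}

lemma auxQ_closed {n : ℕ} (a : Fin n → Euc d) (b : Fin n → ℝ) :
    IsClosed {x : Euc d | ∀ j, ⟪a j, x⟫ ≤ b j} := by
  have h : {x : Euc d | ∀ j, ⟪a j, x⟫ ≤ b j} = ⋂ j, {x | ⟪a j, x⟫ ≤ b j} := by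
    ext x; simp [Set.mem_iInter]
  rw [h]
  exact isClosed_iInter fun j =>
    isClosed_le (Continuous.inner continuous_const continuous_id) continuous_const

lemma auxQ_convex {n : ℕ} (a : Fin n → Euc d) (b : Fin n → ℝ) :
    Convex ℝ {x : Euc d | ∀ j, ⟪a j, x⟫ ≤ b j} := by
  intro x hx y hy s t hs ht hst
  intro j
  have hxj := hx j
  have hyj := hy j
  have h : ⟪a j, s • x + t • y⟫ = s * ⟪a j, x⟫ + t * ⟪a j, y⟫ := by
    rw [inner_add_right, real_inner_smul_right, real_inner_smul_right]
  simp only [Set.mem_setOf_eq] at *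
  rw [h]
  calc s * ⟪a j, x⟫ + t * ⟪a j, y⟫ ≤ s * b j + t * b j :=
        add_le_add (mul_le_mul_of_nonneg_left hxj hs) (mul_le_mul_of_nonneg_left hyj ht)
    _ = b j := by rw [← add_mul, hst, one_mul]

lemma aux_tcone_formula {n : ℕ} (a : Fin n → Euc d) (b : Fin n → ℝ) (v : Euc d)
    (hv : v ∈ {x : Euc d | ∀ j, ⟪a j, x⟫ ≤ b j}) :
    tcone {x : Euc d | ∀ j, ⟪a j, x⟫ ≤ b j} v
      = {y | ∀ j, ⟪a j, v⟫ = b j → ⟪a j, y - v⟫ ≤ 0} := by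
  classical
  ext y
  constructor
  · rintro ⟨ε₀, hε₀, h⟩ j hj
    have h1 := h ε₀ hε₀ le_rfl j
    simp only [Set.mem_setOf_eq, inner_add_right, real_inner_smul_right] at h1
    nlinarith
  · intro hy
    set x := y - v with hx
    set c : Fin n → ℝ := fun j => if 0 < ⟪a j, x⟫ then (b j - ⟪a j, v⟫) / ⟪a j, x⟫ else 1
      with hc
    have hcpos : ∀ j, 0 < c j := by
      intro j
      by_cases hj : 0 < ⟪a j, x⟫
      · have hne : ⟪a j, v⟫ ≠ b j := fun he => absurd (hy j he) (not_le.mpr hj)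
        have hlt : ⟪a j, v⟫ < b j := lt_of_le_of_ne (hv j) hne
        simp only [hc, if_pos hj]
        exact div_pos (by linarith) hj
      · simp only [hc, if_neg hj]; norm_num
    set F : Finset ℝ := insert 1 (Finset.image c Finset.univ) with hF
    have hFne : F.Nonempty := ⟨1, Finset.mem_insert_self _ _⟩
    refine ⟨F.min' hFne, ?_, ?_⟩
    · have hmem : F.min' hFne ∈ insert 1 (Finset.image c Finset.univ) := F.min'_mem hFne
      rcases Finset.mem_insert.mp hmem with h1 | h2
      · rw [h1]; norm_num
      · obtain ⟨j, _, hj⟩ := Finset.mem_image.mp h2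
        rw [← hj]; exact hcpos j
    · intro ε hε hεle j
      simp only [Set.mem_setOf_eq, inner_add_right, real_inner_smul_right]
      by_cases hj : 0 < ⟪a j, x⟫
      · have hcj : F.min' hFne ≤ c j :=
          Finset.min'_le _ _ (Finset.mem_insert_of_mem
            (Finset.mem_image_of_mem c (Finset.mem_univ j)))
        have h2 : ε * ⟪a j, x⟫ ≤ c j * ⟪a j, x⟫ :=
          mul_le_mul_of_nonneg_right (le_trans hεle hcj) hj.le
        have h3 : c j * ⟪a j, x⟫ = b j - ⟪a j, v⟫ := by
          simp only [hc, if_pos hj]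
          exact div_mul_cancel₀ _ hj.ne'
        linarith
      · push_neg at hj
        have := hv j
        nlinarith

lemma aux_tcone_union {n : ℕ} (Q : Fin n → Set (Euc d)) (hcl : ∀ i, IsClosed (Q i))
    (hcv : ∀ i, Convex ℝ (Q i)) (v : Euc d) :
    tcone (⋃ i, Q i) v = ⋃ i, ⋃ (_ : v ∈ Q i), tcone (Q i) v := by
  ext y
  constructor
  · rintro ⟨ε₀, hε₀, h⟩
    have hacc : ∃ i, ∀ δ : ℝ, 0 < δ → ∃ ε : ℝ, 0 < ε ∧ ε ≤ δ ∧ v + ε • (y - v) ∈ Q i := by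
      by_contra hno
      push_neg at hno
      choose δ hδ hδ2 using hno
      have hne : Nonempty (Fin n) := by
        have h1 := h ε₀ hε₀ le_rfl
        rw [Set.mem_iUnion] at h1
        obtain ⟨i, _⟩ := h1
        exact ⟨i⟩
      set ε₁ := min ε₀ (Finset.univ.inf' (Finset.univ_nonempty) δ) with hε₁def
      have hε₁ : 0 < ε₁ :=
        lt_min hε₀ ((Finset.lt_inf'_iff _).mpr fun i _ => hδ i)
      have hmem := h ε₁ hε₁ (min_le_left _ _)
      rw [Set.mem_iUnion] at hmem
      obtain ⟨i, hi⟩ := hmem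
      exact hδ2 i ε₁ hε₁
        (le_trans (min_le_right _ _) (Finset.inf'_le _ (Finset.mem_univ i))) hi
    obtain ⟨i, hi⟩ := hacc
    choose ε hε1 hε2 hε3 using fun m : ℕ => hi (1 / (m + 1)) (by positivity)
    have hεt : Tendsto ε atTop (𝓝 0) := by
      refine squeeze_zero (fun m => (hε1 m).le) hε2 ?_
      exact tendsto_one_div_add_atTop_nhds_zero_nat
    have htend : Tendsto (fun m => v + ε m • (y - v)) atTop (𝓝 v) := by
      have h1 : Tendsto (fun m => ε m • (y - v)) atTop (𝓝 ((0 : ℝ) • (y - v))) :=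
        hεt.smul_const (y - v)
      rw [zero_smul] at h1
      simpa using tendsto_const_nhds.add h1
    have hvQ : v ∈ Q i := (hcl i).mem_of_tendsto htend (Eventually.of_forall hε3)
    have hyQ : y ∈ tcone (Q i) v := by
      obtain ⟨ε₁, hε₁pos, _, hε₁Q⟩ : ∃ ε', 0 < ε' ∧ ε' ≤ 1 ∧ v + ε' • (y - v) ∈ Q i :=
        ⟨ε 0, hε1 0, by simpa using hε2 0, hε3 0⟩
      refine ⟨ε₁, hε₁pos, fun e he hele => ?_⟩
      have hcomb := hcv i hvQ hε₁Q (a := 1 - e / ε₁) (b := e / ε₁)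
        (by
          have : e / ε₁ ≤ 1 := (div_le_one hε₁pos).mpr hele
          linarith)
        (by positivity) (by ring)
      have key : (1 - e / ε₁) • v + (e / ε₁) • (v + ε₁ • (y - v)) = v + e • (y - v) := by
        rw [smul_add, smul_smul, div_mul_cancel₀ _ hε₁pos.ne']
        module
      rwa [key] at hcomb
    exact Set.mem_iUnion.mpr ⟨i, Set.mem_iUnion.mpr ⟨hvQ, hyQ⟩⟩
  · intro hy
    rw [Set.mem_iUnion] at hy
    obtain ⟨i, hy⟩ := hy
    rw [Set.mem_iUnion] at hy
    obtain ⟨hvi, ε₀, hε₀, h⟩ := hy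
    exact ⟨ε₀, hε₀, fun e he hele => Set.mem_iUnion.mpr ⟨i, h e he hele⟩⟩

lemma aux_tcone_null {Q : Set (Euc d)} (hQ : Convex ℝ Q) (h0 : volume Q = 0) {v : Euc d}
    (hv : v ∈ Q) : volume (tcone Q v) = 0 := by
  have hspan : affineSpan ℝ Q ≠ ⊤ := by
    intro htop
    rw [← hQ.interior_nonempty_iff_affineSpan_eq_top] at htop
    have hpos : 0 < volume Q := Measure.measure_pos_of_nonempty_interior volume htop
    exact absurd h0 hpos.ne'
  refine measure_mono_null ?_ (Measure.addHaar_affineSubspace volume _ hspan)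
  rintro y ⟨ε₀, hε₀, h⟩
  have hz : v + ε₀ • (y - v) ∈ Q := h ε₀ hε₀ le_rfl
  have h1 : v ∈ affineSpan ℝ Q := subset_affineSpan ℝ Q hv
  have h2 : v + ε₀ • (y - v) ∈ affineSpan ℝ Q := subset_affineSpan ℝ Q hz
  have h3 := AffineSubspace.smul_vsub_vadd_mem (affineSpan ℝ Q) ε₀⁻¹ h2 h1 h1
  have key : ε₀⁻¹ • (v + ε₀ • (y - v) -ᵥ v) +ᵥ v = y := by
    rw [vsub_eq_sub, vadd_eq_add]
    rw [add_sub_cancel_left, smul_smul, inv_mul_cancel₀ hε₀.ne', one_smul]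
    abel
  rwa [key] at h3

lemma aux_t_exists {ι : Type*} [DecidableEq ι] (v : Euc d) (u : ι → Euc d)
    (hu : ∀ i, u i ≠ 0) (M : ℝ) (s : Finset ι) :
    ∃ t : ι → ℝ, ∀ S ⊆ s, S.Nonempty →
      0 ≤ ⟪v, ∑ i ∈ S, t i • u i⟫ ∧ M < ‖∑ i ∈ S, t i • u i‖ := by
  induction s using Finset.induction_on with
  | empty =>
    exact ⟨0, fun S hS hSne => absurd (Finset.subset_empty.mp hS) hSne.ne_empty⟩
  | @insert a s ha ih =>
    obtain ⟨t', ht'⟩ := ih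
    obtain ⟨B, hBdef⟩ : ∃ B : ℝ, B = ∑ i ∈ s, |t' i| * ‖u i‖ := ⟨_, rfl⟩
    have hB0 : 0 ≤ B := by
      rw [hBdef]; exact Finset.sum_nonneg fun i _ => by positivity
    have hbound : ∀ S ⊆ s, ‖∑ i ∈ S, t' i • u i‖ ≤ B := by
      intro S hS
      rw [hBdef]
      calc ‖∑ i ∈ S, t' i • u i‖ ≤ ∑ i ∈ S, ‖t' i • u i‖ := norm_sum_le _ _
        _ = ∑ i ∈ S, |t' i| * ‖u i‖ := by
            simp [norm_smul, Real.norm_eq_abs]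
        _ ≤ ∑ i ∈ s, |t' i| * ‖u i‖ :=
            Finset.sum_le_sum_of_subset_of_nonneg hS (by intros; positivity)
    have hua : (0 : ℝ) < ‖u a‖ := norm_pos_iff.mpr (hu a)
    set ta : ℝ := (if ⟪v, u a⟫ < 0 then (-1 : ℝ) else 1) * ((|M| + B) / ‖u a‖ + 1) with htadef
    have hquotpos : 0 < (|M| + B) / ‖u a‖ + 1 := by positivity
    have hmag : |ta| = (|M| + B) / ‖u a‖ + 1 := by
      rw [htadef]
      by_cases h : ⟪v, u a⟫ < 0
      · rw [if_pos h, neg_one_mul, abs_neg, abs_of_pos hquotpos]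
      · rw [if_neg h, one_mul, abs_of_pos hquotpos]
    have hta_inner : 0 ≤ ⟪v, ta • u a⟫ := by
      rw [real_inner_smul_right]
      by_cases h : ⟪v, u a⟫ < 0
      · simp only [htadef, if_pos h]
        nlinarith
      · push_neg at h
        simp only [htadef, if_neg (not_lt.mpr h)]
        nlinarith
    have hta_norm : ‖ta • u a‖ = |M| + B + ‖u a‖ := by
      rw [norm_smul, Real.norm_eq_abs, hmag]
      field_simp
    refine ⟨Function.update t' a ta, ?_⟩
    intro S hS hSne
    by_cases haS : a ∈ S
    · have hSsub : S.erase a ⊆ s := by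
        intro x hx
        have hxa := Finset.ne_of_mem_erase hx
        have := hS (Finset.mem_of_mem_erase hx)
        exact (Finset.mem_insert.mp this).resolve_left hxa
      have hsum : ∑ i ∈ S, Function.update t' a ta i • u i
          = ta • u a + ∑ i ∈ S.erase a, t' i • u i := by
        rw [← Finset.add_sum_erase _ _ haS]
        congr 1
        · rw [Function.update_self]
        · exact Finset.sum_congr rfl fun x hx => by
            rw [Function.update_of_ne (Finset.ne_of_mem_erase hx)]
      rw [hsum]
      have hrest : ‖∑ i ∈ S.erase a, t' i • u i‖ ≤ B := hbound _ hSsub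
      constructor
      · rw [inner_add_right]
        rcases (S.erase a).eq_empty_or_nonempty with he | hne
        · rw [he, Finset.sum_empty, inner_zero_right]
          simpa using hta_inner
        · have := (ht' _ hSsub hne).1
          linarith [hta_inner]
      · have h4 : ‖ta • u a‖ ≤ ‖ta • u a + ∑ i ∈ S.erase a, t' i • u i‖
            + ‖∑ i ∈ S.erase a, t' i • u i‖ := by
          simpa using norm_add_le (ta • u a + ∑ i ∈ S.erase a, t' i • u i)
            (-(∑ i ∈ S.erase a, t' i • u i))
        have hM : M ≤ |M| := le_abs_self M
        rw [hta_norm] at h4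
        linarith
    · have hSsub : S ⊆ s := fun x hx =>
        (Finset.mem_insert.mp (hS hx)).resolve_left fun h => haS (by rwa [h] at hx)
      have hsum : ∑ i ∈ S, Function.update t' a ta i • u i = ∑ i ∈ S, t' i • u i :=
        Finset.sum_congr rfl fun x hx => by
          rw [Function.update_of_ne (fun h => haS (by rwa [h] at hx))]
      rw [hsum]
      exact ht' S hSsub hSne

end AuxLemmas

/-- Every generalized polytope of positive Lebesgue measure has an
algebraic vertex. -/
theorem statement_7 {d : ℕ} (P : Set (Euc d))
    (hP : IsGenPolyhedron P) (hPb : Bornology.IsBounded P)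
    (hpos : 0 < volume P) :
    ∃ v : Euc d, IsAlgebraicVertex P v := by
  classical
  obtain ⟨n, Q, hQpoly, hPQ⟩ := hP
  choose m a b ha hrep using hQpoly
  have hQclosed : ∀ i, IsClosed (Q i) := fun i => (hrep i) ▸ auxQ_closed (a i) (b i)
  have hQconvex : ∀ i, Convex ℝ (Q i) := fun i => (hrep i) ▸ auxQ_convex (a i) (b i)
  have hQbdd : ∀ i, Bornology.IsBounded (Q i) := fun i =>
    hPb.subset (hPQ ▸ Set.subset_iUnion Q i)
  have hQcompact : ∀ i, IsCompact (Q i) := fun i =>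
    Metric.isCompact_of_isClosed_isBounded (hQclosed i) (hQbdd i)
  set K : Set (Euc d) := ⋃ i, ⋃ (_ : 0 < volume (Q i)), Q i with hKdef
  have hKcompact : IsCompact K := by
    refine Set.Finite.isCompact_biUnion (Set.toFinite _) fun i _ => hQcompact i
  have hex : ∃ i, 0 < volume (Q i) := by
    by_contra hno
    push_neg at hno
    have h0 : volume P = 0 := by
      rw [hPQ]
      exact measure_iUnion_null fun i => le_antisymm (hno i) zero_le
    exact absurd h0 hpos.ne'
  have hKne : K.Nonempty := by
    obtain ⟨i, hi⟩ := hex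
    obtain ⟨x, hx⟩ := nonempty_of_measure_ne_zero hi.ne'
    exact ⟨x, Set.mem_iUnion.mpr ⟨i, Set.mem_iUnion.mpr ⟨hi, hx⟩⟩⟩
  obtain ⟨v, hvK, hvmax'⟩ := hKcompact.exists_isMaxOn hKne continuous_norm.continuousOn
  have hvmax : ∀ z ∈ K, ‖z‖ ≤ ‖v‖ := fun z hz => hvmax' hz
  obtain ⟨i₀, hi₀⟩ := Set.mem_iUnion.mp hvK
  obtain ⟨hvol₀, hvQ₀⟩ := Set.mem_iUnion.mp hi₀
  have hvP : v ∈ P := by rw [hPQ]; exact Set.mem_iUnion.mpr ⟨i₀, hvQ₀⟩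
  refine ⟨v, hvP, ?_⟩
  rintro ⟨k, α, D, hD, hae⟩
  have hQtc : ∀ i, v ∈ Q i → Q i ⊆ tcone (Q i) v := by
    intro i hvi x hx
    refine ⟨1, one_pos, fun e he he1 => ?_⟩
    have hcomb := hQconvex i hvi hx (a := 1 - e) (b := e) (by linarith) he.le (by ring)
    have key : (1 - e) • v + e • x = v + e • (x - v) := by module
    rwa [key] at hcomb
  have hQT : Q i₀ ⊆ tcone P v := by
    intro x hx
    obtain ⟨ε₀, hε₀, h⟩ := hQtc i₀ hvQ₀ hx
    exact ⟨ε₀, hε₀, fun e he hele => by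
      rw [hPQ]; exact Set.mem_iUnion.mpr ⟨i₀, h e he hele⟩⟩
  rcases Nat.eq_zero_or_pos k with hk0 | hkpos
  · subst hk0
    have hzero : volume (Q i₀) = 0 := by
      rw [measure_eq_zero_iff_ae_notMem]
      filter_upwards [hae] with x hx hxQ
      have h1 : ind (tcone P v) x = 1 := by
        unfold ind; exact Set.indicator_of_mem (hQT hxQ) _
      rw [h1] at hx
      simp at hx
    exact absurd hzero hvol₀.ne'
  · choose u hu0 huinv using fun i => (hD i).2
    haveI : Nontrivial (Euc d) := ⟨u ⟨0, hkpos⟩, 0, hu0 _⟩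
    have hinv : ∀ (i : Fin k) (z : Euc d) (s : ℝ), z + s • u i ∈ D i ↔ z ∈ D i := by
      intro i z s
      constructor
      · intro hz
        rw [← huinv i (-s)]
        exact ⟨z + s • u i, hz, by module⟩
      · intro hz
        rw [← huinv i s]
        exact ⟨z, hz, rfl⟩
    set I : Set (Fin n) := {i | v ∈ Q i ∧ 0 < volume (Q i)} with hIdef
    set T' : Set (Euc d) := ⋃ i, ⋃ (_ : i ∈ I), tcone (Q i) v with hT'def
    have hi₀I : i₀ ∈ I := ⟨hvQ₀, hvol₀⟩
    have hQsubT' : Q i₀ ⊆ T' := fun x hx =>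
      Set.mem_iUnion.mpr ⟨i₀, Set.mem_iUnion.mpr ⟨hi₀I, hQtc i₀ hvQ₀ hx⟩⟩
    set g : Euc d → ℝ := fun x => ∑ i, α i * ind (D i) x with hgdef
    have hTT : tcone P v = ⋃ i, ⋃ (_ : v ∈ Q i), tcone (Q i) v := by
      rw [hPQ]; exact aux_tcone_union Q hQclosed hQconvex v
    have hsubT'TT : T' ⊆ ⋃ i, ⋃ (_ : v ∈ Q i), tcone (Q i) v := by
      intro z hz
      obtain ⟨i, hz⟩ := Set.mem_iUnion.mp hz
      obtain ⟨hiI, hz⟩ := Set.mem_iUnion.mp hz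
      exact Set.mem_iUnion.mpr ⟨i, Set.mem_iUnion.mpr ⟨hiI.1, hz⟩⟩
    have hnull : volume {x | ind (tcone P v) x ≠ ind T' x} = 0 := by
      have hsub : {x | ind (tcone P v) x ≠ ind T' x}
          ⊆ ⋃ i, ⋃ (_ : v ∈ Q i ∧ volume (Q i) = 0), tcone (Q i) v := by
        intro x hx
        simp only [Set.mem_setOf_eq] at hx
        have hxTT : x ∈ tcone P v := by
          by_contra hc
          have hxT' : x ∉ T' := fun hxx => hc (hTT ▸ hsubT'TT hxx)
          exact hx (by
            unfold ind
            rw [Set.indicator_of_notMem hc, Set.indicator_of_notMem hxT'])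
        have hxT' : x ∉ T' := by
          intro hxx
          exact hx (by
            unfold ind
            rw [Set.indicator_of_mem hxTT, Set.indicator_of_mem hxx])
        have hxTT2 := hxTT
        rw [hTT] at hxTT2
        obtain ⟨i, hxi⟩ := Set.mem_iUnion.mp hxTT2
        obtain ⟨hvi, hxi⟩ := Set.mem_iUnion.mp hxi
        have hvol0 : volume (Q i) = 0 := by
          by_contra hvpos
          exact hxT' (Set.mem_iUnion.mpr ⟨i,
            Set.mem_iUnion.mpr ⟨⟨hvi, (zero_le : (0 : ENNReal) ≤ volume (Q i)).lt_of_ne (Ne.symm hvpos)⟩, hxi⟩⟩)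
        exact Set.mem_iUnion.mpr ⟨i, Set.mem_iUnion.mpr ⟨⟨hvi, hvol0⟩, hxi⟩⟩
      refine measure_mono_null hsub ?_
      refine measure_iUnion_null fun i => measure_iUnion_null fun hi => ?_
      exact aux_tcone_null (hQconvex i) hi.2 hi.1
    have haeT' : ind T' =ᵐ[volume] g := by
      have h1 : ind (tcone P v) =ᵐ[volume] ind T' := by
        rw [Filter.EventuallyEq, ae_iff]
        exact hnull
      exact h1.symm.trans hae
    -- geometry of T'
    have hform : ∀ i, v ∈ Q i → tcone (Q i) v
        = {y | ∀ j, ⟪a i j, v⟫ = b i j → ⟪a i j, y - v⟫ ≤ 0} := by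
      intro i hvi
      have hvi' : v ∈ {x : Euc d | ∀ j, ⟪a i j, x⟫ ≤ b i j} := by rw [← hrep i]; exact hvi
      calc tcone (Q i) v = tcone {x : Euc d | ∀ j, ⟪a i j, x⟫ ≤ b i j} v := by rw [← hrep i]
        _ = _ := aux_tcone_formula (a i) (b i) v hvi'
    have hT'closed : IsClosed T' := by
      rw [hT'def]
      refine Set.Finite.isClosed_biUnion (Set.toFinite _) fun i hi => ?_
      rw [hform i hi.1]
      have hrw : {y : Euc d | ∀ j, ⟪a i j, v⟫ = b i j → ⟪a i j, y - v⟫ ≤ 0}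
          = ⋂ j, ⋂ (_ : ⟪a i j, v⟫ = b i j), {y : Euc d | ⟪a i j, y - v⟫ ≤ 0} := by
        ext z; simp [Set.mem_iInter]
      rw [hrw]
      exact isClosed_iInter fun j => isClosed_iInter fun _ =>
        isClosed_le (Continuous.inner continuous_const (continuous_id.sub continuous_const))
          continuous_const
    have hT'cone : ∀ y ∈ T', ∀ s : ℝ, 0 < s → v + s • (y - v) ∈ T' := by
      intro y hy s hs
      obtain ⟨i, hy⟩ := Set.mem_iUnion.mp hy
      obtain ⟨hiI, ε₀, hε₀, h⟩ := Set.mem_iUnion.mp hy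
      refine Set.mem_iUnion.mpr ⟨i, Set.mem_iUnion.mpr ⟨hiI, ε₀ / s, div_pos hε₀ hs, ?_⟩⟩
      intro e he hele
      have hesle : e * s ≤ ε₀ := by
        rw [← div_mul_cancel₀ ε₀ hs.ne']
        exact mul_le_mul_of_nonneg_right hele hs.le
      have h1 := h (e * s) (mul_pos he hs) hesle
      have key : v + e • (v + s • (y - v) - v) = v + (e * s) • (y - v) := by
        rw [add_sub_cancel_left, smul_smul]
      rw [key]
      exact h1
    have hstrict : ∀ x : Euc d, v + x ∈ T' → x ≠ 0 → ⟪v, x⟫ < 0 := by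
      intro x hxT hx0
      obtain ⟨i, hy⟩ := Set.mem_iUnion.mp hxT
      obtain ⟨hiI, ε₀, hε₀, h⟩ := Set.mem_iUnion.mp hy
      have hmem : v + ε₀ • x ∈ Q i := by
        have h1 := h ε₀ hε₀ le_rfl
        rwa [add_sub_cancel_left] at h1
      have hK : v + ε₀ • x ∈ K := Set.mem_iUnion.mpr ⟨i, Set.mem_iUnion.mpr ⟨hiI.2, hmem⟩⟩
      have hle := hvmax _ hK
      have hsq : ‖v + ε₀ • x‖ ^ 2 ≤ ‖v‖ ^ 2 := by
        have h0 := norm_nonneg (v + ε₀ • x)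
        nlinarith
      have hexp : ‖v + ε₀ • x‖ ^ 2 = ‖v‖ ^ 2 + 2 * ⟪v, ε₀ • x⟫ + ‖ε₀ • x‖ ^ 2 :=
        norm_add_sq_real v (ε₀ • x)
      have hinn : ⟪v, ε₀ • x⟫ = ε₀ * ⟪v, x⟫ := real_inner_smul_right v x ε₀
      have hnx : 0 < ‖ε₀ • x‖ := by
        rw [norm_smul]
        have := norm_pos_iff.mpr hx0
        have := abs_pos.mpr hε₀.ne'
        positivity
      nlinarith [mul_pos hnx hnx]
    -- uniform pointedness
    obtain ⟨η, hη, hηT'⟩ : ∃ η : ℝ, 0 < η ∧ ∀ y ∈ T', ⟪v, y - v⟫ ≤ -η * ‖y - v‖ := by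
      have hWsub : {x : Euc d | ‖x‖ = 1 ∧ v + x ∈ T'} ⊆ Metric.sphere 0 1 := by
        intro x hx
        simpa [mem_sphere_zero_iff_norm] using hx.1
      have hWclosed : IsClosed {x : Euc d | ‖x‖ = 1 ∧ v + x ∈ T'} := by
        have hrw : {x : Euc d | ‖x‖ = 1 ∧ v + x ∈ T'}
            = {x : Euc d | ‖x‖ = 1} ∩ (fun x => v + x) ⁻¹' T' := rfl
        rw [hrw]
        exact (isClosed_eq continuous_norm continuous_const).inter
          (hT'closed.preimage (continuous_const.add continuous_id))
      have hWcompact : IsCompact {x : Euc d | ‖x‖ = 1 ∧ v + x ∈ T'} :=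
        IsCompact.of_isClosed_subset (isCompact_sphere 0 1) hWclosed hWsub
      rcases Set.eq_empty_or_nonempty {x : Euc d | ‖x‖ = 1 ∧ v + x ∈ T'} with hWe | hWne
      · exfalso
        have hQv : Q i₀ ⊆ {v} := by
          intro x hx
          by_contra hxv
          have hxT : x ∈ T' := hQsubT' hx
          have hxvne : x - v ≠ 0 := sub_ne_zero.mpr (by simpa using hxv)
          have hnorm : (0 : ℝ) < ‖x - v‖ := norm_pos_iff.mpr hxvne
          have hnz : ‖‖x - v‖⁻¹ • (x - v)‖ = 1 := by
            rw [norm_smul, norm_inv, norm_norm, inv_mul_cancel₀ hnorm.ne']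
          have hzT : v + ‖x - v‖⁻¹ • (x - v) ∈ T' :=
            hT'cone x hxT (‖x - v‖⁻¹) (inv_pos.mpr hnorm)
          have hmm : ‖x - v‖⁻¹ • (x - v) ∈ {x : Euc d | ‖x‖ = 1 ∧ v + x ∈ T'} := ⟨hnz, hzT⟩
          rw [hWe] at hmm
          exact hmm
        have h0 : volume (Q i₀) = 0 := by
          have := measure_mono hQv (μ := volume)
          simpa [measure_singleton] using this
        exact absurd h0 hvol₀.ne'
      · have hcont : Continuous fun x : Euc d => ⟪v, x⟫ :=
          Continuous.inner continuous_const continuous_id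
        obtain ⟨x₀, hx₀W, hmax⟩ := hWcompact.exists_isMaxOn hWne hcont.continuousOn
        have hx₀ne : x₀ ≠ 0 := by
          intro h0
          have h1 := hx₀W.1
          rw [h0, norm_zero] at h1
          norm_num at h1
        have hx₀ : ⟪v, x₀⟫ < 0 := hstrict x₀ hx₀W.2 hx₀ne
        refine ⟨-⟪v, x₀⟫, by linarith, ?_⟩
        intro y hy
        rcases eq_or_ne y v with rfl | hyv
        · simp
        · have hxvne : y - v ≠ 0 := sub_ne_zero.mpr hyv
          have hs : (0 : ℝ) < ‖y - v‖ := norm_pos_iff.mpr hxvne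
          have hnz : ‖‖y - v‖⁻¹ • (y - v)‖ = 1 := by
            rw [norm_smul, norm_inv, norm_norm, inv_mul_cancel₀ hs.ne']
          have hzT : v + ‖y - v‖⁻¹ • (y - v) ∈ T' := hT'cone y hy _ (inv_pos.mpr hs)
          have hle := (isMaxOn_iff.mp hmax) _ (⟨hnz, hzT⟩ :
            ‖y - v‖⁻¹ • (y - v) ∈ {x : Euc d | ‖x‖ = 1 ∧ v + x ∈ T'})
          have hinner : ⟪v, y - v⟫ = ‖y - v‖ * ⟪v, ‖y - v‖⁻¹ • (y - v)⟫ := by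
            rw [real_inner_smul_right, ← mul_assoc, mul_inv_cancel₀ hs.ne', one_mul]
          rw [hinner]
          have h2 : ‖y - v‖ * ⟪v, ‖y - v‖⁻¹ • (y - v)⟫ ≤ ‖y - v‖ * ⟪v, x₀⟫ :=
            mul_le_mul_of_nonneg_left hle hs.le
          nlinarith
    -- radius containing Q i₀
    obtain ⟨R, hR⟩ := (hQbdd i₀).subset_ball v
    have hR0 : 0 < R := by
      obtain ⟨x, hx⟩ := nonempty_of_measure_ne_zero hvol₀.ne'
      have h1 := hR hx
      rw [Metric.mem_ball] at h1
      exact lt_of_le_of_lt dist_nonneg h1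
    -- choice of translation vectors
    obtain ⟨t, ht⟩ := aux_t_exists v u hu0 (R + ‖v‖ * R / η + 1) Finset.univ
    set w : Finset (Fin k) → Euc d := fun S => ∑ i ∈ S, t i • u i with hwdef
    have ht' : ∀ S : Finset (Fin k), S.Nonempty →
        0 ≤ ⟪v, w S⟫ ∧ R + ‖v‖ * R / η + 1 < ‖w S‖ :=
      fun S hS => ht S (Finset.subset_univ S) hS
    have hdisj : ∀ S : Finset (Fin k), S.Nonempty → ∀ x ∈ Metric.ball v R,
        x + w S ∉ T' := by
      intro S hS x hx hmem
      obtain ⟨h1, h2⟩ := ht' S hS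
      have hA := hηT' _ hmem
      have e1 : x + w S - v = (x - v) + w S := by abel
      have hxv : ‖x - v‖ < R := by rwa [Metric.mem_ball, dist_eq_norm] at hx
      have hC : -(‖v‖ * R) ≤ ⟪v, x + w S - v⟫ := by
        rw [e1, inner_add_right]
        have habs : |⟪v, x - v⟫| ≤ ‖v‖ * ‖x - v‖ := abs_real_inner_le_norm v (x - v)
        have h3 : -(‖v‖ * ‖x - v‖) ≤ ⟪v, x - v⟫ := (abs_le.mp habs).1
        nlinarith [norm_nonneg v]
      have hB : R + ‖v‖ * R / η + 1 - R ≤ ‖x + w S - v‖ := by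
        have h4 : ‖w S‖ ≤ ‖(x - v) + w S‖ + ‖x - v‖ := by
          have h5 := norm_add_le ((x - v) + w S) (-(x - v))
          rw [show (x - v) + w S + -(x - v) = w S by abel, norm_neg] at h5
          exact h5
        rw [e1]
        linarith
      have hprod : η * (R + ‖v‖ * R / η + 1 - R) = ‖v‖ * R + η := by
        field_simp
        ring
      nlinarith [mul_le_mul_of_nonneg_left hB hη.le, hA, hC, hη]
    -- a.e. identities
    have hkey : ∀ᵐ x ∂(volume : Measure (Euc d)), ∀ S : Finset (Fin k),
        ind T' (x + w S) = g (x + w S) := by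
      rw [ae_all_iff]
      intro S
      have hqmp := (measurePreserving_add_right (volume : Measure (Euc d))
        (w S)).quasiMeasurePreserving
      have h5 := hqmp.ae_eq haeT'
      exact h5
    have hindinv : ∀ (i : Fin k) (z : Euc d) (s : ℝ),
        ind (D i) (z + s • u i) = ind (D i) z := by
      intro i z s
      unfold ind
      by_cases hz : z ∈ D i
      · rw [Set.indicator_of_mem ((hinv i z s).mpr hz), Set.indicator_of_mem hz]
      · rw [Set.indicator_of_notMem (fun hc => hz ((hinv i z s).mp hc)),
          Set.indicator_of_notMem hz]
    have hg0 : ∀ x : Euc d, ∑ S : Finset (Fin k), (-1 : ℝ) ^ S.card * g (x + w S) = 0 := by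
      intro x
      calc ∑ S : Finset (Fin k), (-1 : ℝ) ^ S.card * g (x + w S)
          = ∑ S : Finset (Fin k), ∑ i : Fin k,
              (-1 : ℝ) ^ S.card * (α i * ind (D i) (x + w S)) := by
            refine Finset.sum_congr rfl fun S _ => ?_
            rw [hgdef]
            exact Finset.mul_sum _ _ _
        _ = ∑ i : Fin k, ∑ S : Finset (Fin k),
              (-1 : ℝ) ^ S.card * (α i * ind (D i) (x + w S)) := Finset.sum_comm
        _ = 0 := by
            refine Finset.sum_eq_zero fun i _ => ?_
            refine Finset.sum_involution
              (fun S _ => if i ∈ S then S.erase i else insert i S) ?_ ?_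
              (fun S _ => Finset.mem_univ _) ?_
            · intro S _
              by_cases hiS : i ∈ S
              · rw [if_pos hiS]
                have hcard : S.card = (S.erase i).card + 1 :=
                  (Finset.card_erase_add_one hiS).symm
                have hsum2 : x + w S = (x + w (S.erase i)) + t i • u i := by
                  rw [hwdef]
                  simp only
                  rw [← Finset.add_sum_erase _ (fun j => t j • u j) hiS]
                  abel
                have hindeq : ind (D i) (x + w S) = ind (D i) (x + w (S.erase i)) := by
                  rw [hsum2, hindinv]
                rw [hindeq, hcard, pow_succ]
                ring
              · rw [if_neg hiS]
                have hcard : (insert i S).card = S.card + 1 :=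
                  Finset.card_insert_of_notMem hiS
                have hsum2 : x + w (insert i S) = (x + w S) + t i • u i := by
                  rw [hwdef]
                  simp only
                  rw [Finset.sum_insert hiS]
                  abel
                have hindeq : ind (D i) (x + w (insert i S)) = ind (D i) (x + w S) := by
                  rw [hsum2, hindinv]
                rw [hindeq, hcard, pow_succ]
                ring
            · intro S _ _
              by_cases hiS : i ∈ S
              · rw [if_pos hiS]
                intro hc
                exact Finset.notMem_erase i S (by rw [hc]; exact hiS)
              · rw [if_neg hiS]
                intro hc
                exact hiS (by rw [← hc]; exact Finset.mem_insert_self i S)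
            · intro S _
              by_cases hiS : i ∈ S
              · rw [if_pos hiS, if_neg (Finset.notMem_erase i S)]
                exact Finset.insert_erase hiS
              · rw [if_neg hiS, if_pos (Finset.mem_insert_self i S)]
                exact Finset.erase_insert hiS
    -- conclusion
    have hfin : ∀ᵐ x ∂(volume : Measure (Euc d)), x ∉ Q i₀ := by
      filter_upwards [hkey] with x hx
      intro hxQ
      have hxball : x ∈ Metric.ball v R := hR hxQ
      have hsum0 : ∑ S : Finset (Fin k), (-1 : ℝ) ^ S.card * ind T' (x + w S) = 0 := by
        rw [Finset.sum_congr rfl fun S _ => by rw [hx S]]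
        exact hg0 x
      have hsingle : ∑ S : Finset (Fin k), (-1 : ℝ) ^ S.card * ind T' (x + w S)
          = (-1 : ℝ) ^ (∅ : Finset (Fin k)).card * ind T' (x + w ∅) := by
        refine Finset.sum_eq_single_of_mem _ (Finset.mem_univ _) fun S _ hS => ?_
        have hSne : S.Nonempty := Finset.nonempty_iff_ne_empty.mpr hS
        have hz : ind T' (x + w S) = 0 := by
          unfold ind
          exact Set.indicator_of_notMem (hdisj S hSne x hxball) _
        rw [hz, mul_zero]
      have hx1 : ind T' x = 1 := by
        unfold ind
        exact Set.indicator_of_mem (hQsubT' hxQ) _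
      have hw0 : w ∅ = 0 := by simp [hwdef]
      rw [hsingle, hw0, add_zero, hx1] at hsum0
      simp at hsum0
    have hcontr : volume (Q i₀) = 0 := measure_eq_zero_iff_ae_notMem.mpr hfin
    exact absurd hcontr hvol₀.ne'
end
end

section
/- Let w_1, …, w_d ∈ ℝ^d be linearly independent vectors and let K = {t_1 w_1 + ⋯ + t_d w_d : t_j ≥ 0} be the simplicial cone they generate. For every z ∈ ℝ^d with ⟨w_j, z⟩ < 0 for all j = 1, …, d, the function x ↦ e^{⟨z,x⟩} is Lebesgue integrable on K and ∫_K e^{⟨z,x⟩} dx = |det(w_1, …, w_d)| / ∏_{j=1}^d (−⟨w_j, z⟩). -/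
open MeasureTheory Filter Topology RealInnerProductSpace

noncomputable section

/-- The `d × d` matrix whose columns are the vectors `w 0, …, w (d-1)`. -/
def colMat {d : ℕ} (w : Fin d → Euc d) : Matrix (Fin d) (Fin d) ℝ :=
  Matrix.of fun i j => w j i

/-- The cone of all nonnegative linear combinations of the vectors `w j`. -/
def posCone {d m : ℕ} (w : Fin m → Euc d) : Set (Euc d) :=
  {x | ∃ t : Fin m → ℝ, (∀ j, 0 ≤ t j) ∧ x = ∑ j, t j • w j}


lemma oneDim_int {c : ℝ} (hc : c < 0) :
    IntegrableOn (fun t : ℝ => Real.exp (c * t)) (Set.Ici 0) volume := by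
  rw [integrableOn_Ici_iff_integrableOn_Ioi]
  have := exp_neg_integrableOn_Ioi 0 (neg_pos.mpr hc)
  simpa using this

lemma oneDim_val {c : ℝ} (hc : c < 0) :
    ∫ t in Set.Ici (0:ℝ), Real.exp (c * t) = (-c)⁻¹ := by
  rw [integral_Ici_eq_integral_Ioi]
  have hb : 0 < -c := neg_pos.mpr hc
  have h := integral_comp_mul_left_Ioi (fun x => Real.exp (-x)) 0 hb
  simp only [mul_zero, neg_mul, neg_neg, smul_eq_mul, integral_exp_neg_Ioi_zero, mul_one] at h
  exact h

lemma euc_sum_apply {d m : ℕ} (v : Fin m → Euc d) (s : Finset (Fin m)) (i : Fin d) :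
    (∑ x ∈ s, v x) i = ∑ x ∈ s, v x i := by
  induction s using Finset.induction with
  | empty => simp
  | insert _ _ h ih => rw [Finset.sum_insert h, Finset.sum_insert h, PiLp.add_apply, ih]

/-- The Fourier–Laplace transform of a simplicial cone: for `z` with
`⟪w j, z⟫ < 0` for all generators, `∫_K e^{⟪z,x⟫} dx = |det(w₁,…,w_d)| / ∏ (-⟪w j, z⟫)`. -/
theorem statement_10 {d : ℕ} (w : Fin d → Euc d) (hw : LinearIndependent ℝ w)
    (z : Euc d) (hz : ∀ j, ⟪w j, z⟫ < 0) :
    IntegrableOn (fun x => Real.exp ⟪z, x⟫) (posCone w) volume ∧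
    ∫ x in posCone w, Real.exp ⟪z, x⟫ =
      |(colMat w).det| / ∏ j, (-⟪w j, z⟫) := by
  classical
  set c : Fin d → ℝ := fun j => ⟪w j, z⟫ with hc_def
  set T : Euc d →ₗ[ℝ] Euc d := Matrix.toEuclideanLin (colMat w) with hTdef
  have hTapp : ∀ t : Euc d, T t = ∑ j, t j • w j := by
    intro t
    ext i
    rw [euc_sum_apply]
    simp [hTdef, Matrix.toEuclideanLin_apply, Matrix.mulVec, dotProduct, colMat,
      PiLp.smul_apply, smul_eq_mul, mul_comm]
  set T' : Euc d →L[ℝ] Euc d := LinearMap.toContinuousLinearMap T with hT'def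
  have hT'coe : ⇑T' = ⇑T := rfl
  have hdet : T'.det = (colMat w).det := by
    rw [ContinuousLinearMap.det]
    have h0 : (T' : Euc d →ₗ[ℝ] Euc d) = T := rfl
    rw [h0, hTdef, Matrix.toEuclideanLin_eq_toLin, LinearMap.det_toLin]
  set s : Set (Euc d) := {t : Euc d | ∀ j, 0 ≤ t j} with hsdef
  have hmeas_coord : ∀ j, Measurable fun t : Euc d => t j := fun j =>
    (measurable_pi_apply j).comp ((MeasurableEquiv.toLp 2 (Fin d → ℝ)).symm).measurable
  have hs_meas : MeasurableSet s := by
    have h1 : s = ⋂ j, {t : Euc d | 0 ≤ t j} := by ext t; simp [hsdef]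
    rw [h1]
    exact MeasurableSet.iInter fun j => measurableSet_le measurable_const (hmeas_coord j)
  have hinj : Set.InjOn ⇑T' s := by
    intro a _ b _ hab
    have h0 : ∑ j, (a j - b j) • w j = 0 := by
      simp_rw [sub_smul, Finset.sum_sub_distrib, ← hTapp a, ← hTapp b]
      rw [hT'coe] at hab
      rw [hab, sub_self]
    have h1 := Fintype.linearIndependent_iff.mp hw (fun j => a j - b j) h0
    ext j
    have h2 : a j - b j = 0 := by simpa using h1 j
    linarith
  have himg : posCone w = ⇑T' '' s := by
    ext x
    constructor
    · rintro ⟨t, ht, rfl⟩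
      exact ⟨(WithLp.equiv 2 (Fin d → ℝ)).symm t, fun j => ht j, by rw [hT'coe, hTapp]; rfl⟩
    · rintro ⟨t, ht, rfl⟩
      exact ⟨fun j => t j, ht, by rw [hT'coe, hTapp]⟩
  have hder : ∀ x ∈ s, HasFDerivWithinAt (⇑T') ((fun _ : Euc d => T') x) s x := fun x _ =>
    T'.hasFDerivAt.hasFDerivWithinAt
  have hinnerT : ∀ t : Euc d, ⟪z, T' t⟫ = ∑ j, c j * t j := by
    intro t
    rw [hT'coe, hTapp, inner_sum]
    refine Finset.sum_congr rfl fun j _ => ?_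
    rw [real_inner_smul_right, real_inner_comm, mul_comm]
  set S : Set (Fin d → ℝ) := Set.univ.pi fun _ => Set.Ici 0 with hSdef
  have hSmeas : MeasurableSet S := MeasurableSet.univ_pi fun _ => measurableSet_Ici
  set F : Fin d → ℝ → ℝ := fun j => (Set.Ici 0).indicator fun u => Real.exp (c j * u) with hFdef
  have hF : ∀ j, Integrable (F j) :=
    fun j => (integrable_indicator_iff measurableSet_Ici).mpr (oneDim_int (hz j))
  have hprod : S.indicator (fun y : Fin d → ℝ => Real.exp (∑ j, c j * y j))
      = fun y => ∏ j, F j (y j) := by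
    funext y
    by_cases hy : y ∈ S
    · rw [Set.indicator_of_mem hy, Real.exp_sum]
      refine Finset.prod_congr rfl fun j _ => ?_
      have hyj : y j ∈ Set.Ici (0:ℝ) := hy j (Set.mem_univ j)
      simp only [hFdef]
      rw [Set.indicator_of_mem hyj]
    · rw [Set.indicator_of_notMem hy]
      rw [hSdef, Set.mem_univ_pi] at hy
      push_neg at hy
      obtain ⟨j, hj⟩ := hy
      symm
      exact Finset.prod_eq_zero (Finset.mem_univ j) (Set.indicator_of_notMem hj _)
  set g : Euc d → ℝ := fun t => Real.exp (∑ j, c j * t j) with hgdef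
  have evp := (EuclideanSpace.volume_preserving_symm_measurableEquiv_toLp (Fin d)).symm
  have hemb := ((MeasurableEquiv.toLp 2 (Fin d → ℝ)).symm).symm.measurableEmbedding
  have hcomp : S.indicator (fun y : Fin d → ℝ => Real.exp (∑ j, c j * y j))
      = (s.indicator g) ∘ ⇑((MeasurableEquiv.toLp 2 (Fin d → ℝ)).symm).symm := by
    funext y
    have hy : ((MeasurableEquiv.toLp 2 (Fin d → ℝ)).symm).symm y ∈ s ↔ y ∈ S := by
      constructor
      · intro h j hjmem
        exact h j
      · intro h j
        exact h j (Set.mem_univ j)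
    by_cases h : y ∈ S
    · rw [Set.indicator_of_mem h, Function.comp_apply, Set.indicator_of_mem (hy.mpr h)]
      rfl
    · rw [Set.indicator_of_notMem h, Function.comp_apply,
        Set.indicator_of_notMem (fun hh => h (hy.mp hh))]
  have hintS : Integrable (fun y : Fin d → ℝ => ∏ j, F j (y j)) :=
    Integrable.fintype_prod hF
  have hintEuc : IntegrableOn g s volume := by
    rw [← integrable_indicator_iff hs_meas]
    rw [← evp.integrable_comp_emb hemb]
    rw [← hcomp, hprod]
    exact hintS
  have hvalEuc : ∫ t in s, g t = ∏ j, (-(c j))⁻¹ := by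
    rw [← integral_indicator hs_meas]
    rw [← evp.integral_comp hemb (s.indicator g)]
    have h1 : (fun y => s.indicator g (((MeasurableEquiv.toLp 2 (Fin d → ℝ)).symm).symm y))
        = fun y => ∏ j, F j (y j) := by
      rw [← hprod, hcomp]
      rfl
    rw [h1, MeasureTheory.integral_fintype_prod_volume_eq_prod (ι := Fin d) F]
    refine Finset.prod_congr rfl fun j _ => ?_
    rw [hFdef]
    rw [integral_indicator measurableSet_Ici]
    exact oneDim_val (hz j)
  have key := integrableOn_image_iff_integrableOn_abs_det_fderiv_smul volume hs_meas hder hinj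
    (fun x => Real.exp ⟪z, x⟫)
  have keyint := integral_image_eq_integral_abs_det_fderiv_smul volume hs_meas hder hinj
    (fun x => Real.exp ⟪z, x⟫)
  constructor
  · rw [himg, key]
    simp only [hdet, smul_eq_mul]
    simp_rw [hinnerT]
    exact hintEuc.const_mul _
  · rw [himg, keyint]
    simp only [hdet, smul_eq_mul]
    simp_rw [hinnerT]
    rw [MeasureTheory.integral_const_mul]
    rw [hvalEuc, Finset.prod_inv_distrib, ← div_eq_mul_inv]
end
end
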